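/- Let n ≥ 2, 1 ≤ m < n, R > 0, and x ∈ ℝⁿ with |x| > R and |x|² > nR²/(2(n−m)). Set s = 2|x|² − R² and let K be the symmetric n×n matrix K = s^{−1/2}·(I − (2/s)·x xᵀ). Then K belongs to the Gårding cone K_m(n), i.e., T_p(K) > 0 for all p = 1, …, m. -/

import Mathlib

open Matrix

/-- The `p`-trace of a square real matrix: the sum of all `p × p` principal minors.
    `ptrace 0 S = 1`. -/
noncomputable def ptrace {ι : Type*} [Fintype ι] (p : ℕ) (S : Matrix ι ι ℝ) : ℝ := by
  classical
  exact ∑ t ∈ Finset.univ.powersetCard p,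
    (S.submatrix (Subtype.val : {x // x ∈ t} → ι) Subtype.val).det

/-- The Gårding cone `K_m(n)`: real symmetric `n × n` matrices with `T_p > 0`
    for `p = 1, …, m`. -/
noncomputable def gardingCone (n m : ℕ) : Set (Matrix (Fin n) (Fin n) ℝ) :=
  {S | S.IsSymm ∧ ∀ p, 1 ≤ p → p ≤ m → 0 < ptrace p S}

lemma card_filter_mem_powersetCard {α : Type*} [DecidableEq α] (s : Finset α) (i : α)
    (hi : i ∈ s) (p : ℕ) (hp : 1 ≤ p) :
    ((s.powersetCard p).filter (fun t => i ∈ t)).card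
      = (s.card - 1).choose (p - 1) := by
  rw [← Finset.card_erase_of_mem hi, ← Finset.card_powersetCard (p-1) (s.erase i)]
  refine Finset.card_nbij' (fun t => t.erase i) (fun u => insert i u) ?_ ?_ ?_ ?_
  · intro t ht
    simp only [Finset.mem_coe, Finset.mem_filter, Finset.mem_powersetCard] at ht ⊢
    exact ⟨Finset.erase_subset_erase _ ht.1.1, by rw [Finset.card_erase_of_mem ht.2, ht.1.2]⟩
  · intro u hu
    simp only [Finset.mem_coe, Finset.mem_powersetCard, Finset.mem_filter] at hu ⊢
    have hiu : i ∉ u := fun h => (Finset.mem_erase.mp (hu.1 h)).1 rfl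
    refine ⟨⟨Finset.insert_subset hi (hu.1.trans (Finset.erase_subset _ _)), ?_⟩,
      Finset.mem_insert_self _ _⟩
    rw [Finset.card_insert_of_notMem hiu, hu.2]
    omega
  · intro t ht
    simp only [Finset.mem_coe, Finset.mem_filter] at ht
    exact Finset.insert_erase ht.2
  · intro u hu
    simp only [Finset.mem_coe, Finset.mem_powersetCard] at hu
    have hiu : i ∉ u := fun h => (Finset.mem_erase.mp (hu.1 h)).1 rfl
    exact Finset.erase_insert hiu

lemma sum_powersetCard_sum {α : Type*} [DecidableEq α] (s : Finset α) (p : ℕ) (hp : 1 ≤ p)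
    (g : α → ℝ) :
    ∑ t ∈ s.powersetCard p, ∑ i ∈ t, g i
      = ((s.card - 1).choose (p - 1) : ℝ) * ∑ i ∈ s, g i := by
  have h1 : ∀ t ∈ s.powersetCard p, ∑ i ∈ t, g i = ∑ i ∈ s, if i ∈ t then g i else 0 := by
    intro t ht
    rw [← Finset.sum_filter, Finset.filter_mem_eq_inter,
      Finset.inter_eq_right.mpr (Finset.mem_powersetCard.mp ht).1]
  rw [Finset.sum_congr rfl h1, Finset.sum_comm]
  rw [Finset.mul_sum]
  refine Finset.sum_congr rfl fun i hi => ?_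
  rw [← Finset.sum_filter, Finset.sum_const, card_filter_mem_powersetCard s i hi p hp,
    nsmul_eq_mul]

lemma det_one_sub_smul_vecMulVec {ι : Type*} [Fintype ι] [DecidableEq ι] (b : ℝ) (y : ι → ℝ) :
    (1 - b • Matrix.vecMulVec y y).det = 1 - b * ∑ i, y i ^ 2 := by
  have h : (1 : Matrix ι ι ℝ) - b • Matrix.vecMulVec y y
      = 1 + Matrix.replicateCol Unit (-(b • y)) * Matrix.replicateRow Unit y := by
    rw [← Matrix.vecMulVec_eq (ι := Unit), sub_eq_add_neg]
    congr 1
    ext i j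
    simp [Matrix.vecMulVec]
    ring
  rw [h, Matrix.det_one_add_replicateCol_mul_replicateRow]
  simp [dotProduct, Finset.mul_sum]
  rw [sub_eq_add_neg, add_right_inj, neg_inj]
  exact Finset.sum_congr rfl fun i _ => by ring

lemma ptrace_eq {ι : Type*} [Fintype ι] [DecidableEq ι] (p : ℕ) (S : Matrix ι ι ℝ) :
    ptrace p S = ∑ t ∈ Finset.univ.powersetCard p,
      (S.submatrix (Subtype.val : {x // x ∈ t} → ι) Subtype.val).det := by
  unfold ptrace
  refine Finset.sum_congr rfl fun t ht => ?_
  congr!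

lemma ptrace_formula (n p : ℕ) (hp : 1 ≤ p) (c b : ℝ) (x : Fin n → ℝ) :
    ptrace p (c • ((1 : Matrix (Fin n) (Fin n) ℝ) - b • Matrix.vecMulVec x x))
      = c ^ p * ((n.choose p : ℝ) - b * (((n-1).choose (p-1) : ℝ) * ∑ i, x i ^ 2)) := by
  rw [ptrace_eq]
  have step : ∀ t ∈ (Finset.univ : Finset (Fin n)).powersetCard p,
      (((c • ((1 : Matrix (Fin n) (Fin n) ℝ) - b • Matrix.vecMulVec x x))).submatrix
        (Subtype.val : {a // a ∈ t} → Fin n) Subtype.val).det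
        = c ^ p * (1 - b * ∑ i ∈ t, x i ^ 2) := by
    intro t ht
    have hcard : t.card = p := (Finset.mem_powersetCard.mp ht).2
    have h1 : ((c • ((1 : Matrix (Fin n) (Fin n) ℝ) - b • Matrix.vecMulVec x x))).submatrix
        (Subtype.val : {a // a ∈ t} → Fin n) Subtype.val
        = c • ((1 : Matrix {a // a ∈ t} {a // a ∈ t} ℝ)
            - b • Matrix.vecMulVec (fun i : {a // a ∈ t} => x i.val)
                (fun i : {a // a ∈ t} => x i.val)) := by
      ext i j
      simp [Matrix.submatrix_apply, Matrix.one_apply, Matrix.vecMulVec_apply,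
        Subtype.val_injective.eq_iff]
    rw [h1, Matrix.det_smul, det_one_sub_smul_vecMulVec, Fintype.card_coe, hcard]
    congr 1
    rw [sub_right_inj]
    congr 1
    exact Finset.sum_coe_sort t (fun i => x i ^ 2)
  refine Eq.trans (Finset.sum_congr rfl fun t ht => step t ht) ?_
  rw [← Finset.mul_sum]
  congr 1
  rw [Finset.sum_sub_distrib, Finset.sum_const, ← Finset.mul_sum,
    sum_powersetCard_sum _ p hp, Finset.card_powersetCard, Finset.card_univ, Fintype.card_fin]
  simp

/-- let `n ≥ 2`, `1 ≤ m < n`, `R > 0`, and `x ∈ ℝⁿ` with `|x| > R` and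
`|x|² > nR²/(2(n−m))`. For `s = 2|x|² − R²`, the matrix `K = s^{-1/2} (I − (2/s) x xᵀ)`
belongs to the Gårding cone `K_m(n)`. -/
theorem hyperboloid_curvature_matrix_mem_gardingCone (n m : ℕ) (hn : 2 ≤ n)
    (h1 : 1 ≤ m) (h2 : m < n) (R : ℝ) (hR : 0 < R)
    (x : Fin n → ℝ) (hx : R ^ 2 < ∑ i, x i ^ 2)
    (hx2 : (n : ℝ) * R ^ 2 / (2 * ((n : ℝ) - (m : ℝ))) < ∑ i, x i ^ 2) :
    (Real.sqrt (2 * ∑ i, x i ^ 2 - R ^ 2))⁻¹ •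
        ((1 : Matrix (Fin n) (Fin n) ℝ)
          - (2 / (2 * ∑ i, x i ^ 2 - R ^ 2)) • Matrix.vecMulVec x x)
      ∈ gardingCone n m := by
  set A := ∑ i, x i ^ 2 with hA
  have hA0 : 0 < A := lt_trans (by positivity) hx
  have hs : 0 < 2 * A - R ^ 2 := by nlinarith
  constructor
  · unfold Matrix.IsSymm
    ext i j
    simp only [Matrix.transpose_apply, Matrix.smul_apply, Matrix.sub_apply,
      Matrix.one_apply, Matrix.vecMulVec_apply, smul_eq_mul]
    rw [mul_comm (x j) (x i)]
    by_cases hij : i = j <;> simp [hij, eq_comm]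
  · intro p hp1 hpm
    rw [ptrace_formula n p hp1]
    have hc : 0 < (Real.sqrt (2 * A - R ^ 2))⁻¹ :=
      inv_pos.mpr (Real.sqrt_pos.mpr hs)
    apply mul_pos (pow_pos hc p)
    have hpn : p ≤ n := le_trans hpm h2.le
    have hc2 : 0 < (((n-1).choose (p-1) : ℕ) : ℝ) := by
      exact_mod_cast Nat.choose_pos (by omega)
    have hkey : (p : ℝ) * (n.choose p : ℝ) = (n : ℝ) * (((n-1).choose (p-1) : ℕ) : ℝ) := by
      have h0 := Nat.add_one_mul_choose_eq (n-1) (p-1)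
      have h1n : n - 1 + 1 = n := by omega
      have h1p : p - 1 + 1 = p := by omega
      rw [h1n, h1p] at h0
      rw [mul_comm]
      exact_mod_cast h0.symm
    have hnm : 0 < 2 * ((n : ℝ) - m) := by
      have : (m : ℝ) < n := by exact_mod_cast h2
      linarith
    have hineq : (n : ℝ) * R ^ 2 < 2 * ((n : ℝ) - p) * A := by
      have hdiv := (div_lt_iff₀ hnm).mp hx2
      have hpm' : (p : ℝ) ≤ m := by exact_mod_cast hpm
      nlinarith
    set c1 : ℝ := (n.choose p : ℝ)
    set c2 : ℝ := (((n-1).choose (p-1) : ℕ) : ℝ)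
    have hform : c1 - 2 / (2 * A - R ^ 2) * (c2 * A)
        = (c1 * (2 * A - R ^ 2) - 2 * c2 * A) / (2 * A - R ^ 2) := by
      field_simp
    rw [hform]
    apply div_pos _ hs
    have hp0 : (0 : ℝ) < p := by exact_mod_cast hp1
    have key2 : (p : ℝ) * (c1 * (2 * A - R ^ 2) - 2 * c2 * A)
        = c2 * (2 * ((n : ℝ) - p) * A - (n : ℝ) * R ^ 2) := by
      linear_combination (2 * A - R ^ 2) * hkey
    have hsub : 0 < 2 * ((n : ℝ) - p) * A - (n : ℝ) * R ^ 2 := by linarith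
    nlinarith [mul_pos hc2 hsub, key2, hp0]
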